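/- Let W be a symmetric n×n matrix with nonnegative entries, a ∈ ℝⁿ with aᵢ > 0, fᵢ : ℝ → ℝ differentiable convex, μ₁ ∈ (0,1), μ₂ > 1. Along the accelerated dynamics ẋᵢ = -(1/aᵢ) Σⱼ Wᵢⱼ [sgn(dᵢⱼ) + sgn^{μ₁}(dᵢⱼ) + sgn^{μ₂}(dᵢⱼ)] with dᵢⱼ = fᵢ'(xᵢ)/aᵢ - fⱼ'(xⱼ)/aⱼ, one has d/dt F(x(t)) ≤ 0, where F(x) = Σᵢ fᵢ(xᵢ). Moreover d/dt F(x(t)) = 0 at time t if and only if dᵢⱼ = 0 for all i,j with Wᵢⱼ > 0. -/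

import Mathlib

open Finset

noncomputable def sgnPow (μ x : ℝ) : ℝ := x * |x| ^ (μ - 1)

lemma sgnPow_neg' (μ x : ℝ) : sgnPow μ (-x) = -sgnPow μ x := by
  unfold sgnPow; rw [abs_neg]; ring

lemma mul_sgnPow_nonneg (μ x : ℝ) : 0 ≤ x * sgnPow μ x := by
  unfold sgnPow
  have h : x * (x * |x| ^ (μ - 1)) = x ^ 2 * |x| ^ (μ - 1) := by ring
  rw [h]
  exact mul_nonneg (sq_nonneg x) (Real.rpow_nonneg (abs_nonneg x) _)

lemma mul_g_nonneg (μ₁ μ₂ x : ℝ) :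
    0 ≤ x * (Real.sign x + sgnPow μ₁ x + sgnPow μ₂ x) := by
  have h1 : 0 ≤ x * Real.sign x := by
    rw [mul_comm]; exact Real.sign_mul_nonneg x
  have h2 := mul_sgnPow_nonneg μ₁ x
  have h3 := mul_sgnPow_nonneg μ₂ x
  nlinarith

lemma mul_g_eq_zero_iff (μ₁ μ₂ x : ℝ) :
    x * (Real.sign x + sgnPow μ₁ x + sgnPow μ₂ x) = 0 ↔ x = 0 := by
  constructor
  · intro h
    by_contra hx
    have h1 : 0 < x * Real.sign x := by
      rw [mul_comm]; exact Real.sign_mul_pos_of_ne_zero x hx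
    have h2 := mul_sgnPow_nonneg μ₁ x
    have h3 := mul_sgnPow_nonneg μ₂ x
    nlinarith
  · rintro rfl; simp

theorem stmt_9 (n : ℕ) (W : Fin n → Fin n → ℝ)
    (hWsym : ∀ i j, W i j = W j i) (hWpos : ∀ i j, 0 ≤ W i j)
    (a : Fin n → ℝ) (ha : ∀ i, 0 < a i)
    (μ₁ μ₂ : ℝ) (hμ₁ : 0 < μ₁ ∧ μ₁ < 1) (hμ₂ : 1 < μ₂)
    (f : Fin n → ℝ → ℝ) (hdiff : ∀ i, Differentiable ℝ (f i))
    (hconv : ∀ i, ConvexOn ℝ Set.univ (f i))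
    (x : ℝ → Fin n → ℝ)
    (d : ℝ → Fin n → Fin n → ℝ)
    (hd : ∀ t i j, d t i j = deriv (f i) (x t i) / a i - deriv (f j) (x t j) / a j)
    (hdyn : ∀ i t, HasDerivAt (fun s => x s i)
      (-(1 / a i) * ∑ j, W i j *
        (Real.sign (d t i j) + sgnPow μ₁ (d t i j) + sgnPow μ₂ (d t i j))) t) :
    ∀ t, HasDerivAt (fun s => ∑ i, f i (x s i))
        (-(1/2) * ∑ i, ∑ j, W i j * (d t i j *
          (Real.sign (d t i j) + sgnPow μ₁ (d t i j) + sgnPow μ₂ (d t i j)))) t ∧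
      (-(1/2) * ∑ i, ∑ j, W i j * (d t i j *
          (Real.sign (d t i j) + sgnPow μ₁ (d t i j) + sgnPow μ₂ (d t i j)))) ≤ 0 ∧
      ((-(1/2) * ∑ i, ∑ j, W i j * (d t i j *
          (Real.sign (d t i j) + sgnPow μ₁ (d t i j) + sgnPow μ₂ (d t i j)))) = 0 ↔
        ∀ i j, 0 < W i j → d t i j = 0) := by
  intro t
  set G : Fin n → Fin n → ℝ := fun i j =>
    Real.sign (d t i j) + sgnPow μ₁ (d t i j) + sgnPow μ₂ (d t i j) with hG
  set c : Fin n → ℝ := fun i => deriv (f i) (x t i) / a i with hc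
  have hdc : ∀ i j, d t i j = c i - c j := fun i j => hd t i j
  have hGanti : ∀ i j, G j i = -G i j := by
    intro i j
    have hdji : d t j i = -(d t i j) := by rw [hdc, hdc]; ring
    simp only [hG, hdji, Real.sign_neg, sgnPow_neg']
    ring
  -- the symmetrization identity
  have hS : ∑ i, ∑ j, W i j * (d t i j * G i j)
      = 2 * ∑ i, ∑ j, W i j * (c i * G i j) := by
    have hswap : ∑ i, ∑ j, W i j * (c j * G i j)
        = -∑ i, ∑ j, W i j * (c i * G i j) := by
      rw [Finset.sum_comm, ← Finset.sum_neg_distrib]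
      refine Finset.sum_congr rfl fun i _ => ?_
      rw [← Finset.sum_neg_distrib]
      refine Finset.sum_congr rfl fun j _ => ?_
      rw [hWsym j i, hGanti i j]
      ring
    calc ∑ i, ∑ j, W i j * (d t i j * G i j)
        = (∑ i, ∑ j, W i j * (c i * G i j))
          - ∑ i, ∑ j, W i j * (c j * G i j) := by
          rw [← Finset.sum_sub_distrib]
          refine Finset.sum_congr rfl fun i _ => ?_
          rw [← Finset.sum_sub_distrib]
          refine Finset.sum_congr rfl fun j _ => ?_
          rw [hdc]; ring
      _ = 2 * ∑ i, ∑ j, W i j * (c i * G i j) := by rw [hswap]; ring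
  -- the derivative
  have hderiv : HasDerivAt (fun s => ∑ i, f i (x s i))
      (-(1/2) * ∑ i, ∑ j, W i j * (d t i j * G i j)) t := by
    have h1 : HasDerivAt (fun s => ∑ i, f i (x s i))
        (∑ i, deriv (f i) (x t i) * (-(1 / a i) * ∑ j, W i j * G i j)) t := by
      apply HasDerivAt.fun_sum
      intro i _
      exact (((hdiff i) (x t i)).hasDerivAt).comp t (hdyn i t)
    have heq : ∑ i, deriv (f i) (x t i) * (-(1 / a i) * ∑ j, W i j * G i j)
        = -(1/2) * ∑ i, ∑ j, W i j * (d t i j * G i j) := by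
      rw [hS]
      rw [show -(1/2 : ℝ) * (2 * ∑ i, ∑ j, W i j * (c i * G i j))
          = -∑ i, ∑ j, W i j * (c i * G i j) by ring]
      rw [← Finset.sum_neg_distrib]
      refine Finset.sum_congr rfl fun i _ => ?_
      rw [← Finset.sum_neg_distrib, Finset.mul_sum, Finset.mul_sum]
      refine Finset.sum_congr rfl fun j _ => ?_
      simp only [hc]
      field_simp
    rw [← heq]
    exact h1
  refine ⟨hderiv, ?_, ?_⟩
  · have hnn : 0 ≤ ∑ i, ∑ j, W i j * (d t i j * G i j) :=
      Finset.sum_nonneg fun i _ => Finset.sum_nonneg fun j _ =>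
        mul_nonneg (hWpos i j) (mul_g_nonneg μ₁ μ₂ (d t i j))
    nlinarith
  · constructor
    · intro h i j hWij
      have hzero : ∑ i, ∑ j, W i j * (d t i j * G i j) = 0 := by linarith
      have hterm : ∀ i ∈ Finset.univ, (0:ℝ) ≤ ∑ j, W i j * (d t i j * G i j) :=
        fun i _ => Finset.sum_nonneg fun j _ =>
          mul_nonneg (hWpos i j) (mul_g_nonneg μ₁ μ₂ (d t i j))
      have h1 := (Finset.sum_eq_zero_iff_of_nonneg hterm).mp hzero i (Finset.mem_univ i)
      have hterm2 : ∀ j ∈ Finset.univ, (0:ℝ) ≤ W i j * (d t i j * G i j) :=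
        fun j _ => mul_nonneg (hWpos i j) (mul_g_nonneg μ₁ μ₂ (d t i j))
      have h2 := (Finset.sum_eq_zero_iff_of_nonneg hterm2).mp h1 j (Finset.mem_univ j)
      have h3 : d t i j * G i j = 0 := by
        rcases mul_eq_zero.mp h2 with hW | hdg
        · exact absurd hW (ne_of_gt hWij)
        · exact hdg
      exact (mul_g_eq_zero_iff μ₁ μ₂ (d t i j)).mp h3
    · intro h
      have : ∑ i, ∑ j, W i j * (d t i j * G i j) = 0 := by
        refine Finset.sum_eq_zero fun i _ => Finset.sum_eq_zero fun j _ => ?_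
        rcases lt_or_eq_of_le (hWpos i j) with hW | hW
        · rw [h i j hW]; simp
        · rw [← hW]; ring
      rw [this]; ring
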